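/- Assume the statement: for every continuous f : I^n → ℝ^{n-1} there exist p ∈ ℝ^{n-1} and a compact connected set S ⊆ f^{-1}({p}) meeting two opposite faces of I^n. Then there is no retraction r : I^n → ∂I^n (continuous map restricting to the identity on ∂I^n), and consequently every continuous map I^n → I^n has a fixed point. -/

import Mathlib

open Finset Set

noncomputable def qsum (n : ℕ) (u : Fin n → ℝ) : ℝ := ∑ i, u i ^ 2

noncomputable def ipr (n : ℕ) (u v : Fin n → ℝ) : ℝ := ∑ i, u i * v i

noncomputable def psi (n : ℕ) (u : Fin n → ℝ) : Fin n → ℝ :=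
  if u = 0 then 0 else (‖u‖ / Real.sqrt (qsum n u)) • u

lemma qsum_nonneg (n : ℕ) (u : Fin n → ℝ) : 0 ≤ qsum n u :=
  Finset.sum_nonneg fun i _ => sq_nonneg _

lemma qsum_eq_zero_iff {n : ℕ} {u : Fin n → ℝ} : qsum n u = 0 ↔ u = 0 := by
  rw [qsum, Finset.sum_eq_zero_iff_of_nonneg fun i _ => sq_nonneg _]
  constructor
  · intro h; funext i
    have := h i (Finset.mem_univ i)
    exact pow_eq_zero_iff two_ne_zero |>.mp this
  · intro h; subst h; simp

lemma qsum_pos {n : ℕ} {u : Fin n → ℝ} (hu : u ≠ 0) : 0 < qsum n u :=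
  lt_of_le_of_ne (qsum_nonneg n u) fun h => hu (qsum_eq_zero_iff.mp h.symm)

lemma norm_le_sqrt_qsum (n : ℕ) (u : Fin n → ℝ) : ‖u‖ ≤ Real.sqrt (qsum n u) := by
  refine (pi_norm_le_iff_of_nonneg (Real.sqrt_nonneg _)).mpr fun i => ?_
  have h1 : ‖u i‖ = Real.sqrt ((u i) ^ 2) := by
    rw [Real.sqrt_sq_eq_abs, Real.norm_eq_abs]
  rw [h1]
  exact Real.sqrt_le_sqrt (Finset.single_le_sum (fun j _ => sq_nonneg (u j)) (Finset.mem_univ i))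

lemma qsum_smul (n : ℕ) (a : ℝ) (u : Fin n → ℝ) : qsum n (a • u) = a ^ 2 * qsum n u := by
  simp only [qsum, Pi.smul_apply, smul_eq_mul, mul_pow, ← Finset.mul_sum]

lemma qsum_psi (n : ℕ) (u : Fin n → ℝ) : qsum n (psi n u) = ‖u‖ ^ 2 := by
  by_cases hu : u = 0
  · subst hu; simp [psi, qsum_eq_zero_iff.mpr rfl]
  · have hq : 0 < qsum n u := qsum_pos hu
    have hs : Real.sqrt (qsum n u) ≠ 0 := by positivity
    rw [psi, if_neg hu, qsum_smul, div_pow, Real.sq_sqrt hq.le]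
    field_simp

lemma sqrt_qsum_psi (n : ℕ) (u : Fin n → ℝ) : Real.sqrt (qsum n (psi n u)) = ‖u‖ := by
  rw [qsum_psi, Real.sqrt_sq (norm_nonneg u)]

lemma psi_injective (n : ℕ) : Function.Injective (psi n) := by
  intro u v h
  have h1 : ‖u‖ ^ 2 = ‖v‖ ^ 2 := by rw [← qsum_psi, ← qsum_psi, h]
  have hnorm : ‖u‖ = ‖v‖ := by
    rw [← Real.sqrt_sq (norm_nonneg u), h1, Real.sqrt_sq (norm_nonneg v)]
  by_cases hu : u = 0
  · have : ‖v‖ = 0 := by rw [← hnorm, hu, norm_zero]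
    rw [hu, (norm_eq_zero.mp this)]
  · have hv : v ≠ 0 := by
      intro hv0
      rw [hv0, norm_zero] at hnorm
      exact hu (norm_eq_zero.mp hnorm)
    have hv2 : (0:ℝ) < ‖v‖ := norm_pos_iff.mpr hv
    have hEu : 0 < Real.sqrt (qsum n u) := Real.sqrt_pos.mpr (qsum_pos hu)
    have hEv : 0 < Real.sqrt (qsum n v) := Real.sqrt_pos.mpr (qsum_pos hv)
    have hE : Real.sqrt (qsum n u) = Real.sqrt (qsum n v) := by
      have h2 : ‖psi n u‖ = ‖psi n v‖ := by rw [h]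
      rw [psi, if_neg hu, psi, if_neg hv, norm_smul, norm_smul,
        Real.norm_eq_abs, Real.norm_eq_abs, abs_of_nonneg (by positivity),
        abs_of_nonneg (by positivity), hnorm] at h2
      have h3 : ‖v‖ / Real.sqrt (qsum n u) = ‖v‖ / Real.sqrt (qsum n v) :=
        mul_right_cancel₀ (ne_of_gt hv2) h2
      rw [div_eq_div_iff hEu.ne' hEv.ne'] at h3
      exact (mul_left_cancel₀ (ne_of_gt hv2) h3).symm
    rw [psi, if_neg hu, psi, if_neg hv, hnorm, hE] at h
    have hc : ‖v‖ / Real.sqrt (qsum n v) ≠ 0 := ne_of_gt (div_pos hv2 hEv)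
    exact smul_right_injective (Fin n → ℝ) hc h

lemma continuous_qsum (n : ℕ) : Continuous (qsum n) :=
  continuous_finset_sum _ fun i _ => (continuous_apply i).pow 2

lemma continuous_psi (n : ℕ) : Continuous (psi n) := by
  rw [continuous_iff_continuousAt]
  intro u
  by_cases hu : u = 0
  · subst hu
    have hpsi0 : psi n 0 = 0 := by simp [psi]
    rw [ContinuousAt, hpsi0]
    refine squeeze_zero_norm (fun v => ?_) tendsto_norm_zero
    by_cases hv : v = 0
    · simp [psi, hv]
    · rw [psi, if_neg hv, norm_smul, Real.norm_eq_abs, abs_of_nonneg (by positivity)]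
      have h1 : ‖v‖ / Real.sqrt (qsum n v) ≤ 1 := by
        rw [div_le_one (Real.sqrt_pos.mpr (qsum_pos hv))]
        exact norm_le_sqrt_qsum n v
      exact mul_le_of_le_one_left (norm_nonneg v) h1
  · have hs : Real.sqrt (qsum n u) ≠ 0 :=
      ne_of_gt (Real.sqrt_pos.mpr (qsum_pos hu))
    have hca : ContinuousAt (fun v => (‖v‖ / Real.sqrt (qsum n v)) • v) u :=
      (continuous_norm.continuousAt.div
        ((Real.continuous_sqrt.comp (continuous_qsum n)).continuousAt) hs).smul continuousAt_id
    refine hca.congr ?_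
    filter_upwards [(isOpen_compl_singleton (x := (0 : Fin n → ℝ))).mem_nhds hu] with v hv
    have hv' : v ≠ 0 := hv
    simp [psi, hv']

lemma qsum_add_smul (n : ℕ) (u v : Fin n → ℝ) (t : ℝ) :
    qsum n (u + t • v) = qsum n u + 2 * t * ipr n u v + t ^ 2 * qsum n v := by
  have h : ∀ i, (u i + t * v i) ^ 2
      = u i ^ 2 + (2 * t) * (u i * v i) + t ^ 2 * v i ^ 2 := fun i => by ring
  simp only [qsum, ipr, Pi.add_apply, Pi.smul_apply, smul_eq_mul, h,
    Finset.sum_add_distrib, ← Finset.mul_sum]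

lemma ipr_self_sub (n : ℕ) (u v : Fin n → ℝ) :
    ipr n u (u - v) = qsum n u - ipr n u v := by
  have h : ∀ i, u i * (u i - v i) = u i ^ 2 - u i * v i := fun i => by ring
  simp only [ipr, qsum, Pi.sub_apply, h, Finset.sum_sub_distrib]

lemma ipr_le (n : ℕ) (u v : Fin n → ℝ) :
    ipr n u v ≤ Real.sqrt (qsum n u) * Real.sqrt (qsum n v) := by
  have h2 : (ipr n u v) ^ 2 ≤ qsum n u * qsum n v :=
    Finset.sum_mul_sq_le_sq_mul_sq _ _ _
  calc ipr n u v ≤ |ipr n u v| := le_abs_self _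
    _ = Real.sqrt ((ipr n u v) ^ 2) := (Real.sqrt_sq_eq_abs _).symm
    _ ≤ Real.sqrt (qsum n u * qsum n v) := Real.sqrt_le_sqrt h2
    _ = Real.sqrt (qsum n u) * Real.sqrt (qsum n v) := Real.sqrt_mul (qsum_nonneg n u) _

lemma exit_sq {qy b qd : ℝ} (hqd : 0 < qd) (hy : qy ≤ 1/4) :
    qy + 2 * ((-b + Real.sqrt (b ^ 2 + qd * (1/4 - qy))) / qd) * b
      + ((-b + Real.sqrt (b ^ 2 + qd * (1/4 - qy))) / qd) ^ 2 * qd = 1/4 := by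
  have hdisc : 0 ≤ b ^ 2 + qd * (1/4 - qy) := by nlinarith [sq_nonneg b]
  have hs := Real.sq_sqrt hdisc
  set s := Real.sqrt (b ^ 2 + qd * (1/4 - qy)) with hsdef
  field_simp
  nlinarith [hs]

lemma exit_zero {b qd : ℝ} (hb : 0 ≤ b) (hqd : 0 < qd) :
    (-b + Real.sqrt (b ^ 2 + qd * (1/4 - 1/4))) / qd = 0 := by
  rw [sub_self, mul_zero, add_zero, Real.sqrt_sq hb, neg_add_cancel, zero_div]

noncomputable def cent (n : ℕ) : Fin n → ℝ := fun _ => 1/2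

lemma norm_sub_cent_le {n : ℕ} {x : Fin n → ℝ} (hx : x ∈ Set.Icc (0 : Fin n → ℝ) 1) :
    ‖x - cent n‖ ≤ 1/2 := by
  refine (pi_norm_le_iff_of_nonneg (by norm_num)).mpr fun i => ?_
  have h0 := hx.1 i
  have h1 := hx.2 i
  simp only [Pi.zero_apply, Pi.one_apply] at h0 h1
  rw [Pi.sub_apply, cent, Real.norm_eq_abs, abs_le]
  constructor <;> [linarith; linarith]

lemma norm_sub_cent_eq {n : ℕ} {x : Fin n → ℝ} (hx : x ∈ Set.Icc (0 : Fin n → ℝ) 1)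
    {i : Fin n} (hi : x i = 0 ∨ x i = 1) : ‖x - cent n‖ = 1/2 := by
  refine le_antisymm (norm_sub_cent_le hx) ?_
  have h := norm_le_pi_norm (x - cent n) i
  simp only [Pi.sub_apply, cent, Real.norm_eq_abs] at h
  rcases hi with hi | hi
  · rw [hi] at h; norm_num at h
    exact h
  · rw [hi] at h; norm_num at h
    exact h

lemma frontier_cube (n : ℕ) :
    frontier (Set.Icc (0 : Fin n → ℝ) 1)
      = {x | x ∈ Set.Icc (0 : Fin n → ℝ) 1 ∧ ∃ i, x i = 0 ∨ x i = 1} := by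
  have hcl : IsClosed (Set.Icc (0 : Fin n → ℝ) 1) := isClosed_Icc
  rw [hcl.frontier_eq]
  have hint : interior (Set.Icc (0 : Fin n → ℝ) 1)
      = Set.pi Set.univ fun i => Set.Ioo (0:ℝ) 1 := by
    rw [← Set.pi_univ_Icc, interior_pi_set Set.finite_univ]
    simp [interior_Icc]
  rw [hint]
  ext x
  simp only [Set.mem_diff, Set.mem_pi, Set.mem_univ, forall_true_left, Set.mem_setOf_eq,
    Set.mem_Ioo, not_forall]
  constructor
  · rintro ⟨hx, i, hi⟩
    refine ⟨hx, i, ?_⟩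
    have h0 := hx.1 i; have h1 := hx.2 i
    simp only [Pi.zero_apply, Pi.one_apply] at h0 h1
    by_cases h : x i = 0
    · exact Or.inl h
    · right
      rcases not_and_or.mp hi with h2 | h2
      · exact absurd (lt_of_le_of_ne h0 (Ne.symm h)) h2
      · linarith [not_lt.mp h2]
  · rintro ⟨hx, i, hi⟩
    refine ⟨hx, i, ?_⟩
    rcases hi with hi | hi <;> rw [hi] <;> simp

lemma preconn_pair {X : Type*} [MetricSpace X] {A : Set X} (h : IsPreconnected A)
    {a b : X} (ha : a ∈ A) (hb : b ∈ A) (hsub : A ⊆ {a, b}) : a = b := by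
  by_contra hne
  have hd : 0 < dist a b := dist_pos.mpr hne
  have := h (Metric.ball a (dist a b / 2)) (Metric.ball b (dist a b / 2))
    Metric.isOpen_ball Metric.isOpen_ball
    (fun x hx => by
      rcases hsub hx with rfl | rfl
      · exact Or.inl (Metric.mem_ball_self (by linarith))
      · exact Or.inr (Metric.mem_ball_self (by linarith)))
    ⟨a, ha, Metric.mem_ball_self (by linarith)⟩
    ⟨b, hb, Metric.mem_ball_self (by linarith)⟩
  obtain ⟨z, _, hz1, hz2⟩ := this
  rw [Metric.mem_ball] at hz1 hz2
  have := dist_triangle a z b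
  rw [dist_comm z a] at hz1
  linarith

lemma fiber_ext {n : ℕ} (hn : 1 ≤ n) (p : Fin (n-1) → ℝ) {w w' : Fin n → ℝ}
    (hw : ∀ j : Fin (n-1), w (Fin.castLE (Nat.sub_le n 1) j) = p j)
    (hw' : ∀ j : Fin (n-1), w' (Fin.castLE (Nat.sub_le n 1) j) = p j)
    (hl : w ⟨n-1, by omega⟩ = w' ⟨n-1, by omega⟩) : w = w' := by
  funext k
  by_cases hk : (k : ℕ) < n - 1
  · have h1 : k = Fin.castLE (Nat.sub_le n 1) ⟨(k : ℕ), hk⟩ := by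
      apply Fin.ext; rfl
    rw [h1, hw, hw']
  · have h2 : k = ⟨n-1, by omega⟩ := by
      apply Fin.ext
      have h3 := k.isLt
      show (k : ℕ) = n - 1
      omega
    rw [h2]; exact hl

lemma fiber_last_sq {n : ℕ} (hn : 1 ≤ n) (p : Fin (n-1) → ℝ) {w w' : Fin n → ℝ}
    (hq : qsum n w = 1/4) (hq' : qsum n w' = 1/4)
    (hw : ∀ j : Fin (n-1), w (Fin.castLE (Nat.sub_le n 1) j) = p j)
    (hw' : ∀ j : Fin (n-1), w' (Fin.castLE (Nat.sub_le n 1) j) = p j) :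
    (w ⟨n-1, by omega⟩) ^ 2 = (w' ⟨n-1, by omega⟩) ^ 2 := by
  set l : Fin n := ⟨n-1, by omega⟩ with hl
  have hsum : ∀ v : Fin n → ℝ, qsum n v = (∑ k ∈ Finset.univ.erase l, v k ^ 2) + v l ^ 2 :=
    fun v => (Finset.sum_erase_add Finset.univ _ (Finset.mem_univ l)).symm
  have hco : ∀ k ∈ Finset.univ.erase l, w k ^ 2 = w' k ^ 2 := by
    intro k hk
    have hkl : k ≠ l := (Finset.mem_erase.mp hk).1
    have hklt : (k : ℕ) < n - 1 := by
      have := k.isLt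
      rcases Nat.lt_or_ge (k : ℕ) (n-1) with h | h
      · exact h
      · exfalso
        apply hkl
        apply Fin.ext
        show (k : ℕ) = n - 1
        omega
    have h1 : k = Fin.castLE (Nat.sub_le n 1) ⟨(k : ℕ), hklt⟩ := Fin.ext rfl
    rw [h1, hw, hw']
  have h1 := hsum w
  have h2 := hsum w'
  rw [hq] at h1; rw [hq'] at h2
  rw [Finset.sum_congr rfl hco] at h1
  linarith

/-- The common endgame: a preconnected family inside one fiber over `p` intersected with the
Euclidean sphere of radius `1/2` is a singleton. -/
lemma key_lemma {n : ℕ} (hn : 1 ≤ n) (p : Fin (n-1) → ℝ) {A : Set (Fin n → ℝ)}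
    (hA : IsPreconnected A)
    (hfib : ∀ w ∈ A, qsum n w = 1/4 ∧
      ∀ j : Fin (n-1), w (Fin.castLE (Nat.sub_le n 1) j) = p j)
    {wa wb : Fin n → ℝ} (ha : wa ∈ A) (hb : wb ∈ A) : wa = wb := by
  by_contra hne
  set l : Fin n := ⟨n-1, by omega⟩ with hldef
  obtain ⟨hqa, hca⟩ := hfib wa ha
  obtain ⟨hqb, hcb⟩ := hfib wb hb
  have hlab : wa l ≠ wb l := fun h => hne (fiber_ext hn p hca hcb h)
  have hsub : A ⊆ {wa, wb} := by
    intro w hw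
    obtain ⟨hqw, hcw⟩ := hfib w hw
    have h1 : (w l) ^ 2 = (wa l) ^ 2 := fiber_last_sq hn p hqw hqa hcw hca
    have h2 : (wb l) ^ 2 = (wa l) ^ 2 := fiber_last_sq hn p hqb hqa hcb hca
    rcases sq_eq_sq_iff_eq_or_eq_neg.mp h1 with h | h
    · exact Or.inl (fiber_ext hn p hcw hca h)
    · rcases sq_eq_sq_iff_eq_or_eq_neg.mp h2 with h' | h'
      · exact absurd h'.symm hlab
      · right
        refine fiber_ext hn p hcw hcb ?_
        rw [h, h']
  exact hne (preconn_pair hA ha hb hsub)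

/-- Assuming Theorem B (every continuous `f : Iⁿ → ℝⁿ⁻¹` has a level set containing a
compact connected subset meeting two opposite faces of `Iⁿ`), there is no retraction of
`Iⁿ` onto its boundary, and every continuous self-map of `Iⁿ` has a fixed point. -/
theorem no_retraction_and_fixed_point (n : ℕ) (hn : 1 ≤ n)
    (H : ∀ f : (Fin n → ℝ) → (Fin (n - 1) → ℝ),
      ContinuousOn f (Set.Icc (0 : Fin n → ℝ) 1) →
      ∃ (p : Fin (n - 1) → ℝ) (S : Set (Fin n → ℝ)),
        IsCompact S ∧ IsPreconnected S ∧ S ⊆ Set.Icc (0 : Fin n → ℝ) 1 ∧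
        (∀ x ∈ S, f x = p) ∧
        ∃ i : Fin n, (∃ x ∈ S, x i = 0) ∧ (∃ x ∈ S, x i = 1)) :
    (¬ ∃ r : (Fin n → ℝ) → (Fin n → ℝ),
        ContinuousOn r (Set.Icc (0 : Fin n → ℝ) 1) ∧
        (∀ x ∈ Set.Icc (0 : Fin n → ℝ) 1, r x ∈ frontier (Set.Icc (0 : Fin n → ℝ) 1)) ∧
        (∀ x ∈ frontier (Set.Icc (0 : Fin n → ℝ) 1), r x = x)) ∧
    (∀ g : (Fin n → ℝ) → (Fin n → ℝ),
        ContinuousOn g (Set.Icc (0 : Fin n → ℝ) 1) →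
        (∀ x ∈ Set.Icc (0 : Fin n → ℝ) 1, g x ∈ Set.Icc (0 : Fin n → ℝ) 1) →
        ∃ x ∈ Set.Icc (0 : Fin n → ℝ) 1, g x = x) := by
  constructor
  · -- no retraction
    rintro ⟨r, hrc, hrmem, hrid⟩
    set W : (Fin n → ℝ) → (Fin n → ℝ) := fun x => psi n (r x - cent n) with hWdef
    set f : (Fin n → ℝ) → (Fin (n-1) → ℝ) :=
      fun x j => W x (Fin.castLE (Nat.sub_le n 1) j) with hfdef
    have hWc : ContinuousOn W (Set.Icc (0 : Fin n → ℝ) 1) :=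
      (continuous_psi n).comp_continuousOn (hrc.sub continuousOn_const)
    have hfc : ContinuousOn f (Set.Icc (0 : Fin n → ℝ) 1) :=
      continuousOn_pi.mpr fun j => (continuous_apply _).comp_continuousOn hWc
    obtain ⟨p, S, hScomp, hSconn, hSsub, hfp, i, ⟨a, haS, hai⟩, ⟨b, hbS, hbi⟩⟩ := H f hfc
    have hfib : ∀ w ∈ W '' S, qsum n w = 1/4 ∧
        ∀ j : Fin (n-1), w (Fin.castLE (Nat.sub_le n 1) j) = p j := by
      rintro w ⟨x, hx, rfl⟩
      constructor
      · have hrx := hrmem x (hSsub hx)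
        rw [frontier_cube n] at hrx
        obtain ⟨hrx1, k, hk⟩ := hrx
        show qsum n (psi n (r x - cent n)) = 1/4
        rw [qsum_psi, norm_sub_cent_eq hrx1 hk]
        norm_num
      · intro j
        have := congrFun (hfp x hx) j
        exact this
    have hWab : W a = W b :=
      key_lemma hn p (hSconn.image W (hWc.mono hSsub)) hfib
        ⟨a, haS, rfl⟩ ⟨b, hbS, rfl⟩
    have hrab : r a = r b := by
      have := psi_injective n hWab
      have h2 : r a - cent n = r b - cent n := this
      exact sub_left_injective h2
    have hafr : a ∈ frontier (Set.Icc (0 : Fin n → ℝ) 1) := by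
      rw [frontier_cube n]; exact ⟨hSsub haS, i, Or.inl hai⟩
    have hbfr : b ∈ frontier (Set.Icc (0 : Fin n → ℝ) 1) := by
      rw [frontier_cube n]; exact ⟨hSsub hbS, i, Or.inr hbi⟩
    have hab : a = b := by
      rw [← hrid a hafr, ← hrid b hbfr]; exact hrab
    rw [hab, hbi] at hai
    norm_num at hai
  · -- fixed point
    intro g hgc hgmap
    by_contra hno
    push_neg at hno
    set Y : (Fin n → ℝ) → (Fin n → ℝ) := fun x => psi n (x - cent n) with hYdef
    set Z : (Fin n → ℝ) → (Fin n → ℝ) := fun x => psi n (g x - cent n) with hZdef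
    set D : (Fin n → ℝ) → (Fin n → ℝ) := fun x => Y x - Z x with hDdef
    set B : (Fin n → ℝ) → ℝ := fun x => ipr n (Y x) (D x) with hBdef
    set QD : (Fin n → ℝ) → ℝ := fun x => qsum n (D x) with hQDdef
    set QY : (Fin n → ℝ) → ℝ := fun x => qsum n (Y x) with hQYdef
    set T : (Fin n → ℝ) → ℝ :=
      fun x => (-B x + Real.sqrt (B x ^ 2 + QD x * (1/4 - QY x))) / QD x with hTdef
    set W : (Fin n → ℝ) → (Fin n → ℝ) := fun x => Y x + T x • D x with hWdef
    set f : (Fin n → ℝ) → (Fin (n-1) → ℝ) :=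
      fun x j => W x (Fin.castLE (Nat.sub_le n 1) j) with hfdef
    set cube := Set.Icc (0 : Fin n → ℝ) 1 with hcube
    -- basic facts
    have hD0 : ∀ x ∈ cube, D x ≠ 0 := by
      intro x hx hD
      have h1 : Y x = Z x := sub_eq_zero.mp (show Y x - Z x = 0 from hD)
      have h2 : x - cent n = g x - cent n := psi_injective n h1
      have h3 : g x = x := (sub_left_injective h2).symm
      exact hno x hx h3
    have hQDpos : ∀ x ∈ cube, 0 < QD x := fun x hx => qsum_pos (hD0 x hx)
    have hQYle : ∀ x ∈ cube, QY x ≤ 1/4 := by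
      intro x hx
      show qsum n (psi n (x - cent n)) ≤ 1/4
      rw [qsum_psi]
      have := norm_sub_cent_le (n := n) hx
      nlinarith [norm_nonneg (x - cent n)]
    -- continuity
    have hYc : Continuous Y := (continuous_psi n).comp (continuous_id.sub continuous_const)
    have hZc : ContinuousOn Z cube :=
      (continuous_psi n).comp_continuousOn (hgc.sub continuousOn_const)
    have hDc : ContinuousOn D cube := hYc.continuousOn.sub hZc
    have hBc : ContinuousOn B cube := by
      have hc2 : ContinuousOn (fun x => ∑ i, Y x i * D x i) cube :=
        continuousOn_finset_sum _ fun i _ =>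
          ((continuous_apply i).comp hYc).continuousOn.mul
            ((continuous_apply i).comp_continuousOn hDc)
      exact hc2
    have hQDc : ContinuousOn QD cube := (continuous_qsum n).comp_continuousOn hDc
    have hQYc : ContinuousOn QY cube := ((continuous_qsum n).comp hYc).continuousOn
    have hTc : ContinuousOn T cube := by
      refine ContinuousOn.div ?_ hQDc (fun x hx => (hQDpos x hx).ne')
      refine hBc.neg.add (Real.continuous_sqrt.comp_continuousOn ?_)
      exact (hBc.pow 2).add (hQDc.mul (continuousOn_const.sub hQYc))
    have hWc : ContinuousOn W cube := hYc.continuousOn.add (hTc.smul hDc)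
    have hfc : ContinuousOn f cube :=
      continuousOn_pi.mpr fun j => (continuous_apply _).comp_continuousOn hWc
    obtain ⟨p, S, hScomp, hSconn, hSsub, hfp, i, ⟨a, haS, hai⟩, ⟨b, hbS, hbi⟩⟩ := H f hfc
    have hfib : ∀ w ∈ W '' S, qsum n w = 1/4 ∧
        ∀ j : Fin (n-1), w (Fin.castLE (Nat.sub_le n 1) j) = p j := by
      rintro w ⟨x, hx, rfl⟩
      have hxc : x ∈ cube := hSsub hx
      constructor
      · show qsum n (Y x + T x • D x) = 1/4
        rw [qsum_add_smul]
        exact exit_sq (hQDpos x hxc) (hQYle x hxc) (b := B x)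
      · intro j
        exact congrFun (hfp x hx) j
    -- at boundary points the exit time is zero
    have hbd : ∀ x ∈ S, ∀ k : Fin n, (x k = 0 ∨ x k = 1) → W x = Y x := by
      intro x hx k hk
      have hxc : x ∈ cube := hSsub hx
      have hQYx : QY x = 1/4 := by
        show qsum n (psi n (x - cent n)) = 1/4
        rw [qsum_psi, norm_sub_cent_eq hxc hk]
        norm_num
      have hBx : 0 ≤ B x := by
        show 0 ≤ ipr n (Y x) (Y x - Z x)
        rw [ipr_self_sub]
        have hCS : ipr n (Y x) (Z x) ≤ Real.sqrt (qsum n (Y x)) * Real.sqrt (qsum n (Z x)) :=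
          ipr_le n _ _
        have e1 : Real.sqrt (qsum n (Y x)) = ‖x - cent n‖ := sqrt_qsum_psi n _
        have e2 : Real.sqrt (qsum n (Z x)) = ‖g x - cent n‖ := sqrt_qsum_psi n _
        rw [e1, e2] at hCS
        have h2 : ‖g x - cent n‖ ≤ 1/2 := norm_sub_cent_le (hgmap x hxc)
        have h3 : qsum n (Y x) = ‖x - cent n‖ ^ 2 := qsum_psi n _
        have h4 : ‖x - cent n‖ = 1/2 := norm_sub_cent_eq hxc hk
        rw [h3, h4]
        rw [h4] at hCS
        nlinarith [norm_nonneg (g x - cent n)]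
      have hTx : T x = 0 := by
        show (-B x + Real.sqrt (B x ^ 2 + QD x * (1/4 - QY x))) / QD x = 0
        rw [hQYx]
        exact exit_zero hBx (hQDpos x hxc)
      show Y x + T x • D x = Y x
      rw [hTx, zero_smul, add_zero]
    have hWab : W a = W b :=
      key_lemma hn p (hSconn.image W (hWc.mono hSsub)) hfib ⟨a, haS, rfl⟩ ⟨b, hbS, rfl⟩
    have hYab : Y a = Y b := by
      rw [← hbd a haS i (Or.inl hai), ← hbd b hbS i (Or.inr hbi)]
      exact hWab
    have hab : a = b := by
      have h1 : a - cent n = b - cent n := psi_injective n hYab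
      exact sub_left_injective h1
    rw [hab, hbi] at hai
    norm_num at hai
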